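/- Consider the parametric linear program LP(ω): minimize c^T x over x ∈ ℝ^n subject to G x ≤ ψ + F ω, and its dual: maximize −σ^T(ψ + F ω) over σ ∈ ℝ^m subject to σ ≥ 0 and G^T σ = −c. Let Ω ⊆ ℝ^k be a polyhedron, and suppose x* : ℝ^k → ℝ^n and σ* : ℝ^k → ℝ^m are functions such that for every ω ∈ Ω, x*(ω) is the unique optimal solution of LP(ω) and σ*(ω) is the unique optimal solution of the dual. Then there exist finitely many polyhedra R₁, …, R_N in ℝ^k whose union equals Ω such that, for each i, x* coincides with an affine map on R_i and σ* is constant on R_i; consequently the primal decision policy is piecewise affine and the dual decision policy is a stepwise (piecewise constant) function on Ω. -/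

import Mathlib

/-- A polyhedron in `ℝ^k`: a set of the form `{x | A x ≤ b}` (componentwise). -/
def IsPolyhedron {k : ℕ} (S : Set (Fin k → ℝ)) : Prop :=
  ∃ (m : ℕ) (A : Matrix (Fin m) (Fin k) ℝ) (b : Fin m → ℝ),
    S = {x | ∀ i, A.mulVec x i ≤ b i}

open Matrix Set Finset
open scoped Classical

/-- Epsilon trick: given finitely many positive bounds, find a uniform small ε. -/
lemma exists_pos_mul_le {ι : Type*} (s : Finset ι) (f g : ι → ℝ)
    (hf : ∀ i ∈ s, 0 < f i) : ∃ ε : ℝ, 0 < ε ∧ ∀ i ∈ s, ε * g i ≤ f i := by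
  classical
  induction s using Finset.induction_on with
  | empty => exact ⟨1, one_pos, by simp⟩
  | @insert a s ha ih =>
    obtain ⟨ε₁, hε₁, h₁⟩ := ih (fun i hi => hf i (Finset.mem_insert_of_mem hi))
    have hfa : 0 < f a := hf a (Finset.mem_insert_self a s)
    set ε₂ : ℝ := f a / (|g a| + 1) with hε₂def
    have hga : (0:ℝ) < |g a| + 1 := by positivity
    have hε₂ : 0 < ε₂ := by positivity
    refine ⟨min ε₁ ε₂, lt_min hε₁ hε₂, ?_⟩
    intro i hi
    rcases Finset.mem_insert.1 hi with rfl | hi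
    · have h1 : min ε₁ ε₂ * g i ≤ ε₂ * |g i| := by
        have : min ε₁ ε₂ * g i ≤ min ε₁ ε₂ * |g i| :=
          mul_le_mul_of_nonneg_left (le_abs_self _) (le_of_lt (lt_min hε₁ hε₂))
        have : min ε₁ ε₂ * |g i| ≤ ε₂ * |g i| :=
          mul_le_mul_of_nonneg_right (min_le_right _ _) (abs_nonneg _)
        linarith [mul_le_mul_of_nonneg_left (le_abs_self (g i)) (le_of_lt (lt_min hε₁ hε₂))]
      have h2 : ε₂ * |g i| ≤ f i := by
        rw [hε₂def, div_mul_eq_mul_div, div_le_iff₀ hga]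
        nlinarith [abs_nonneg (g i), hfa]
      linarith
    · rcases le_or_gt (g i) 0 with hg | hg
      · have : min ε₁ ε₂ * g i ≤ 0 :=
          mul_nonpos_of_nonneg_of_nonpos (le_of_lt (lt_min hε₁ hε₂)) hg
        exact this.trans (le_of_lt (hf i (Finset.mem_insert_of_mem hi)))
      · calc min ε₁ ε₂ * g i ≤ ε₁ * g i :=
              mul_le_mul_of_nonneg_right (min_le_left _ _) (le_of_lt hg)
          _ ≤ f i := h₁ i hi

/-- The conical hull (set form) of a finite family. -/
def coneOf {E : Type*} [AddCommMonoid E] [Module ℝ E] {ι : Type*} [Fintype ι]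
    (V : ι → E) : Set E :=
  {x | ∃ μ : ι → ℝ, (∀ i, 0 ≤ μ i) ∧ ∑ i, μ i • V i = x}

/-- Conic Carathéodory: every element of a finitely generated cone lies in the cone of a
linearly independent subfamily. -/
lemma coneOf_caratheodory {E : Type*} [AddCommGroup E] [Module ℝ E] {ι : Type*} [Fintype ι]
    [DecidableEq ι] (V : ι → E) (x : E) (hx : x ∈ coneOf V) :
    ∃ t : Finset ι, LinearIndependent ℝ (fun i : t => V i) ∧
      ∃ ν : ι → ℝ, (∀ i, 0 ≤ ν i) ∧ (∀ i ∉ t, ν i = 0) ∧ ∑ i, ν i • V i = x := by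
  classical
  obtain ⟨μ, hμ0, hμx⟩ := hx
  -- we induct on the support
  suffices H : ∀ (N : ℕ) (s : Finset ι) (μ : ι → ℝ), s.card ≤ N → (∀ i, 0 ≤ μ i) →
      (∀ i ∉ s, μ i = 0) →
      ∃ t : Finset ι, LinearIndependent ℝ (fun i : t => V i) ∧
        ∃ ν : ι → ℝ, (∀ i, 0 ≤ ν i) ∧ (∀ i ∉ t, ν i = 0) ∧
          ∑ i, ν i • V i = ∑ i, μ i • V i by
    obtain ⟨t, ht, ν, h1, h2, h3⟩ := H (Finset.univ.card) Finset.univ μ le_rfl hμ0 (by simp)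
    exact ⟨t, ht, ν, h1, h2, h3.trans hμx⟩
  intro N
  induction N with
  | zero =>
    intro s μ hcard hμ0 hsupp
    have hs : s = ∅ := Finset.card_eq_zero.1 (Nat.le_zero.1 hcard)
    subst hs
    refine ⟨∅, linearIndependent_empty_type, μ, hμ0, fun i _ => hsupp i (by simp), rfl⟩
  | succ N ih =>
    intro s μ hcard hμ0 hsupp
    by_cases hli : LinearIndependent ℝ (fun i : s => V i)
    · exact ⟨s, hli, μ, hμ0, hsupp, rfl⟩
    · -- there's a nontrivial linear relation supported on s
      obtain ⟨g, hgsum, j, hgj⟩ := Fintype.not_linearIndependent_iff.1 hli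
      -- extend g to ι, WLOG positive somewhere
      have hrel : ∃ lam : ι → ℝ, (∀ i ∉ s, lam i = 0) ∧ (∑ i, lam i • V i = 0) ∧
          ∃ i ∈ s, 0 < lam i := by
        set lam : ι → ℝ := fun i => if h : i ∈ s then g ⟨i, h⟩ else 0 with hlam
        have hsum : ∑ i, lam i • V i = 0 := by
          have e1 : ∑ i ∈ s, lam i • V i = ∑ i, lam i • V i :=
            Finset.sum_subset (Finset.subset_univ s) (fun i _ hi => by simp [hlam, hi])
          have e2 : ∑ i ∈ s, lam i • V i = ∑ i : {x // x ∈ s}, g i • V ↑i := by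
            rw [← Finset.sum_attach s (fun i => lam i • V i), Finset.univ_eq_attach]
            exact Finset.sum_congr rfl fun i _ => by simp [hlam, i.2]
          rw [← e1, e2, hgsum]
        rcases lt_or_gt_of_ne hgj with h | h
        · refine ⟨-lam, fun i hi => by simp [hlam, hi], by
            simp only [Pi.neg_apply, neg_smul, Finset.sum_neg_distrib, hsum, neg_zero], j.1, j.2, ?_⟩
          simp only [Pi.neg_apply, hlam, dif_pos j.2]
          exact neg_pos.2 h
        · exact ⟨lam, fun i hi => by simp [hlam, hi], hsum, j.1, j.2, by simp [hlam, dif_pos j.2, h]⟩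
      obtain ⟨lam, hlam0, hlamsum, i₀', hi₀'⟩ := hrel
      set T : Finset ι := s.filter (fun i => 0 < lam i) with hT
      have hTne : T.Nonempty := ⟨i₀', Finset.mem_filter.2 ⟨hi₀'.1, hi₀'.2⟩⟩
      obtain ⟨i₀, hi₀T, hi₀min⟩ := Finset.exists_min_image T (fun i => μ i / lam i) hTne
      have hi₀s : i₀ ∈ s := (Finset.mem_filter.1 hi₀T).1
      have hlami₀ : 0 < lam i₀ := (Finset.mem_filter.1 hi₀T).2
      set r : ℝ := μ i₀ / lam i₀ with hr
      have hr0 : 0 ≤ r := div_nonneg (hμ0 i₀) hlami₀.le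
      set ν : ι → ℝ := fun i => μ i - r * lam i with hν
      have hν0 : ∀ i, 0 ≤ ν i := by
        intro i
        by_cases his : i ∈ s
        · rcases le_or_gt (lam i) 0 with h | h
          · have : r * lam i ≤ 0 := mul_nonpos_of_nonneg_of_nonpos hr0 h
            simp only [hν]; linarith [hμ0 i]
          · have := hi₀min i (Finset.mem_filter.2 ⟨his, h⟩)
            simp only [hν]
            rw [sub_nonneg, hr]
            rw [div_le_div_iff₀ hlami₀ h] at this
            calc μ i₀ / lam i₀ * lam i = μ i₀ * lam i / lam i₀ := by ring
              _ ≤ μ i * lam i₀ / lam i₀ := by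
                  gcongr
              _ = μ i := by field_simp
        · simp [hν, hlam0 i his, hsupp i his]
      have hνi₀ : ν i₀ = 0 := by
        have hne := hlami₀.ne'
        simp only [hν, hr]
        field_simp
        ring
      have hνsupp : ∀ i ∉ s.erase i₀, ν i = 0 := by
        intro i hi
        by_cases h : i = i₀
        · exact h ▸ hνi₀
        · have his : i ∉ s := fun hs => hi (Finset.mem_erase.2 ⟨h, hs⟩)
          simp [hν, hlam0 i his, hsupp i his]
      have hνsum : ∑ i, ν i • V i = ∑ i, μ i • V i := by
        have h1 : ∑ i, (r * lam i) • V i = r • ∑ i, lam i • V i := by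
          rw [Finset.smul_sum]
          exact Finset.sum_congr rfl fun i _ => mul_smul r (lam i) (V i)
        calc ∑ i, ν i • V i = ∑ i, (μ i • V i - (r * lam i) • V i) :=
              Finset.sum_congr rfl fun i _ => by rw [hν]; rw [sub_smul]
          _ = ∑ i, μ i • V i - ∑ i, (r * lam i) • V i := Finset.sum_sub_distrib _ _
          _ = ∑ i, μ i • V i := by rw [h1, hlamsum, smul_zero, sub_zero]
      have hcard' : (s.erase i₀).card ≤ N := by
        have := Finset.card_erase_of_mem hi₀s
        omega
      obtain ⟨t, ht, ν', h1, h2, h3⟩ := ih (s.erase i₀) ν hcard' hν0 hνsupp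
      exact ⟨t, ht, ν', h1, h2, h3.trans hνsum⟩

lemma isClosed_coneOf_linIndep {E : Type*} [NormedAddCommGroup E] [NormedSpace ℝ E]
    [FiniteDimensional ℝ E] {ι : Type*} [Fintype ι] [DecidableEq ι]
    (V : ι → E) (hV : LinearIndependent ℝ V) : IsClosed (coneOf V) := by
  classical
  set f : (ι → ℝ) →ₗ[ℝ] E :=
    { toFun := fun μ => ∑ i, μ i • V i
      map_add' := fun μ ν => by
        simp [add_smul, Finset.sum_add_distrib]
        
      map_smul' := fun c μ => by
        simp [Finset.smul_sum, mul_smul] } with hf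
  have hker : LinearMap.ker f = ⊥ := by
    rw [LinearMap.ker_eq_bot']
    intro μ hμ
    have := Fintype.linearIndependent_iff.1 hV μ hμ
    funext i; exact this i
  obtain ⟨g, hg⟩ := LinearMap.exists_leftInverse_of_injective f hker
  have hgf : ∀ μ, g (f μ) = μ := fun μ => by
    have := LinearMap.congr_fun hg μ; simpa using this
  have hset : coneOf V = (⇑g) ⁻¹' {μ : ι → ℝ | ∀ i, 0 ≤ μ i} ∩ (LinearMap.range f : Set E) := by
    ext x
    constructor
    · rintro ⟨μ, hμ0, rfl⟩
      refine ⟨?_, ⟨μ, rfl⟩⟩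
      show ∀ i, 0 ≤ g (f μ) i
      rw [hgf]; exact hμ0
    · rintro ⟨hx, ⟨μ, rfl⟩⟩
      refine ⟨μ, ?_, rfl⟩
      have : ∀ i, 0 ≤ g (f μ) i := hx
      rwa [hgf] at this
  rw [hset]
  apply IsClosed.inter
  · apply IsClosed.preimage (g.continuous_of_finiteDimensional)
    have : {μ : ι → ℝ | ∀ i, 0 ≤ μ i} = ⋂ i, {μ : ι → ℝ | 0 ≤ μ i} := by
      ext; simp [Set.mem_iInter]
    rw [this]
    exact isClosed_iInter fun i => isClosed_le continuous_const (continuous_apply i)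
  · exact (LinearMap.range f).closed_of_finiteDimensional

lemma sum_indicator_subtype {E : Type*} [AddCommMonoid E] [Module ℝ E] {ι : Type*} [Fintype ι]
    (t : Finset ι) (ν : ι → ℝ) (hν : ∀ i ∉ t, ν i = 0) (V : ι → E) :
    ∑ i : t, ν i • V i = ∑ i, ν i • V i := by
  rw [Finset.sum_coe_sort t (fun i => ν i • V i)]
  exact Finset.sum_subset (Finset.subset_univ t) (fun i _ hi => by simp [hν i hi])

lemma isClosed_coneOf {E : Type*} [NormedAddCommGroup E] [NormedSpace ℝ E]
    [FiniteDimensional ℝ E] {ι : Type*} [Fintype ι] [DecidableEq ι] (V : ι → E) :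
    IsClosed (coneOf V) := by
  classical
  have hrw : coneOf V = ⋃ t : {t : Finset ι // LinearIndependent ℝ fun i : t => V i},
      coneOf (fun i : t.1 => V i.1) := by
    ext x
    constructor
    · intro hx
      obtain ⟨t, ht, ν, h0, hsupp, hsum⟩ := coneOf_caratheodory V x hx
      refine Set.mem_iUnion.2 ⟨⟨t, ht⟩, ⟨fun i => ν i, fun i => h0 i, ?_⟩⟩
      rw [sum_indicator_subtype t ν hsupp V, hsum]
    · intro hx
      obtain ⟨⟨t, ht⟩, ν, h0, hsum⟩ := Set.mem_iUnion.1 hx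
      set μ : ι → ℝ := fun i => if h : i ∈ t then ν ⟨i, h⟩ else 0 with hμ
      refine ⟨μ, fun i => ?_, ?_⟩
      · by_cases h : i ∈ t
        · simpa [hμ, h] using h0 ⟨i, h⟩
        · simp [hμ, h]
      · rw [← sum_indicator_subtype t μ (fun i hi => by simp [hμ, hi]) V, ← hsum]
        exact Finset.sum_congr rfl fun i _ => by simp [hμ, i.2]
  rw [hrw]
  exact isClosed_iUnion_of_finite fun t => isClosed_coneOf_linIndep _ t.2

/-- **Farkas' lemma**. -/
lemma farkas_lemma {n : ℕ} {ι : Type*} [Fintype ι] (V : ι → (Fin n → ℝ)) (c : Fin n → ℝ)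
    (h : ¬ ∃ μ : ι → ℝ, (∀ i, 0 ≤ μ i) ∧ ∑ i, μ i • V i = c) :
    ∃ d : Fin n → ℝ, (∀ i, 0 ≤ V i ⬝ᵥ d) ∧ c ⬝ᵥ d < 0 := by
  classical
  set E := EuclideanSpace ℝ (Fin n) with hE
  set V' : ι → E := fun i => WithLp.toLp 2 (V i) with hV'
  set c' : E := WithLp.toLp 2 c with hc'
  set K : ConvexCone ℝ E :=
    { carrier := coneOf V'
      smul_mem' := by
        rintro a ha x ⟨μ, hμ0, rfl⟩
        refine ⟨fun i => a * μ i, fun i => mul_nonneg ha.le (hμ0 i), ?_⟩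
        rw [Finset.smul_sum]
        exact Finset.sum_congr rfl fun i _ => mul_smul a (μ i) (V' i)
      add_mem' := by
        rintro x ⟨μ, hμ0, rfl⟩ y ⟨ν, hν0, rfl⟩
        refine ⟨fun i => μ i + ν i, fun i => add_nonneg (hμ0 i) (hν0 i), ?_⟩
        rw [← Finset.sum_add_distrib]
        exact Finset.sum_congr rfl fun i _ => add_smul (μ i) (ν i) (V' i) } with hK
  have hne : (K : Set E).Nonempty := ⟨0, ⟨fun _ => 0, fun _ => le_rfl, by simp⟩⟩
  have hcl : IsClosed (K : Set E) := isClosed_coneOf V'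
  have hcK : c' ∉ K := fun ⟨μ, hμ0, hμs⟩ => h ⟨μ, hμ0, by
    have := congrArg WithLp.ofLp hμs
    rw [WithLp.ofLp_sum] at this
    exact this⟩
  obtain ⟨y, hy1, hy2⟩ := ProperCone.hyperplane_separation'
      (C := ({ carrier := coneOf V'
               add_mem' := fun ha hb => K.add_mem ha hb
               zero_mem' := hne.some_mem.elim fun _ _ => ⟨fun _ => 0, fun _ => le_rfl, by simp⟩
               smul_mem' := by
                 rintro a x ⟨μ, hμ0, rfl⟩
                 refine ⟨fun i => a * μ i, fun i => mul_nonneg a.2 (hμ0 i), ?_⟩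
                 rw [Finset.smul_sum]
                 exact Finset.sum_congr rfl fun i _ => by rw [mul_smul]; rfl
               isClosed' := hcl } : ProperCone ℝ E)) hcK
  have hVK : ∀ i, V' i ∈ K := by
    intro i
    refine ⟨fun j => if j = i then 1 else 0, fun j => by dsimp only; split <;> norm_num, ?_⟩
    simp [ite_smul]
  refine ⟨fun j => y j, fun i => ?_, ?_⟩
  · have := hy1 (V' i) (hVK i)
    rw [PiLp.inner_apply] at this
    simpa [hV', dotProduct, PiLp.inner_apply, RCLike.inner_apply, conj_trivial, mul_comm] using this
  · have h2 : (inner ℝ c' y : ℝ) < 0 := hy2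
    rw [PiLp.inner_apply] at h2
    simp only [RCLike.inner_apply, conj_trivial] at h2
    simpa [hc', dotProduct, mul_comm] using h2

/-- Weak LP duality. -/
lemma weak_duality {n m : ℕ} {c x σ : _} {b : Fin m → ℝ} {G : Matrix (Fin m) (Fin n) ℝ}
    (hx : ∀ i, G.mulVec x i ≤ b i) (hσ0 : ∀ i, 0 ≤ σ i)
    (hσ : Gᵀ.mulVec σ = -c) : -(σ ⬝ᵥ b) ≤ c ⬝ᵥ x := by
  have h1 : σ ⬝ᵥ G.mulVec x ≤ σ ⬝ᵥ b := by
    simp only [dotProduct]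
    exact Finset.sum_le_sum fun i _ => mul_le_mul_of_nonneg_left (hx i) (hσ0 i)
  have h2 : σ ⬝ᵥ G.mulVec x = -(c ⬝ᵥ x) := by
    rw [Matrix.dotProduct_mulVec, ← Matrix.mulVec_transpose, hσ, neg_dotProduct]
  linarith

/-- At a unique primal optimum there is a complementary dual certificate. -/
lemma lp_exists_dual_certificate {n m : ℕ} (c : Fin n → ℝ) (G : Matrix (Fin m) (Fin n) ℝ)
    (b : Fin m → ℝ) (xs : Fin n → ℝ)
    (hfeas : ∀ i, G.mulVec xs i ≤ b i)
    (hopt : ∀ x, (∀ i, G.mulVec x i ≤ b i) → x ≠ xs → c ⬝ᵥ xs < c ⬝ᵥ x) :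
    ∃ μ : Fin m → ℝ, (∀ i, 0 ≤ μ i) ∧ Gᵀ.mulVec μ = -c ∧ μ ⬝ᵥ b = -(c ⬝ᵥ xs) := by
  classical
  set J : Finset (Fin m) := Finset.univ.filter (fun i => G.mulVec xs i = b i) with hJ
  have hfar : ∃ μh : J → ℝ, (∀ i, 0 ≤ μh i) ∧ ∑ i : J, μh i • G i.1 = -c := by
    by_contra hcon
    obtain ⟨d, hd1, hd2⟩ := farkas_lemma (fun i : J => G i.1) (-c) hcon
    have hcd : 0 < c ⬝ᵥ d := by
      rw [neg_dotProduct] at hd2; linarith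
    obtain ⟨ε, hε, hεle⟩ := exists_pos_mul_le (Finset.univ.filter (fun i => i ∉ J))
        (fun i => b i - G.mulVec xs i) (fun i => -(G.mulVec d i)) (by
          intro i hi
          have hiJ : i ∉ J := (Finset.mem_filter.1 hi).2
          have : G.mulVec xs i ≠ b i := fun h => hiJ (Finset.mem_filter.2 ⟨Finset.mem_univ _, h⟩)
          have := lt_of_le_of_ne (hfeas i) this
          simpa using this)
    set x' : Fin n → ℝ := xs - ε • d with hx'
    have hx'feas : ∀ i, G.mulVec x' i ≤ b i := by
      intro i
      have hexp : G.mulVec x' i = G.mulVec xs i - ε * G.mulVec d i := by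
        rw [hx', Matrix.mulVec_sub, Matrix.mulVec_smul]
        simp
      by_cases hiJ : i ∈ J
      · have hact : G.mulVec xs i = b i := (Finset.mem_filter.1 hiJ).2
        have hGd : 0 ≤ G.mulVec d i := hd1 ⟨i, hiJ⟩
        rw [hexp, hact]
        nlinarith
      · have := hεle i (Finset.mem_filter.2 ⟨Finset.mem_univ _, hiJ⟩)
        rw [hexp]
        nlinarith
    have hval : c ⬝ᵥ x' = c ⬝ᵥ xs - ε * (c ⬝ᵥ d) := by
      rw [hx', dotProduct_sub, dotProduct_smul]
      simp
    have hlt : c ⬝ᵥ x' < c ⬝ᵥ xs := by rw [hval]; nlinarith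
    have hne : x' ≠ xs := fun h => by rw [h] at hlt; exact lt_irrefl _ hlt
    have := hopt x' hx'feas hne
    linarith
  obtain ⟨μh, hμh0, hμhsum⟩ := hfar
  set μ : Fin m → ℝ := fun i => if h : i ∈ J then μh ⟨i, h⟩ else 0 with hμ
  have hμ0 : ∀ i, 0 ≤ μ i := by
    intro i
    by_cases h : i ∈ J
    · simpa [hμ, h] using hμh0 ⟨i, h⟩
    · simp [hμ, h]
  have hμsum : ∑ i, μ i • G i = -c := by
    rw [← sum_indicator_subtype J μ (fun i hi => by simp [hμ, hi]) (fun i => G i), ← hμhsum]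
    exact Finset.sum_congr rfl fun i _ => by simp [hμ, i.2]
  have hGT : Gᵀ.mulVec μ = -c := by
    funext j
    have := congrFun hμsum j
    simpa [Matrix.mulVec, dotProduct, Matrix.transpose_apply, Finset.sum_apply,
      mul_comm] using this
  refine ⟨μ, hμ0, hGT, ?_⟩
  have h1 : μ ⬝ᵥ b = μ ⬝ᵥ G.mulVec xs := by
    simp only [dotProduct]
    refine Finset.sum_congr rfl fun i _ => ?_
    by_cases h : i ∈ J
    · rw [(Finset.mem_filter.1 h).2]
    · simp [hμ, h]
  rw [h1, Matrix.dotProduct_mulVec, ← Matrix.mulVec_transpose, hGT, neg_dotProduct]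

/-- Uniqueness of the dual optimum on its support pattern. -/
lemma dual_support_unique {n m : ℕ} {c : Fin n → ℝ} {G : Matrix (Fin m) (Fin n) ℝ}
    {b : Fin m → ℝ} {σs : Fin m → ℝ}
    (hσs0 : ∀ i, 0 ≤ σs i) (hσseq : Gᵀ.mulVec σs = -c)
    (hopt : ∀ σ : Fin m → ℝ, ((∀ i, 0 ≤ σ i) ∧ Gᵀ.mulVec σ = -c) → σ ≠ σs →
      -(σ ⬝ᵥ b) < -(σs ⬝ᵥ b))
    (σ' : Fin m → ℝ) (hsupp : ∀ i, σs i = 0 → σ' i = 0)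
    (hσ'0 : ∀ i, 0 ≤ σ' i) (hσ'eq : Gᵀ.mulVec σ' = -c) : σ' = σs := by
  classical
  by_contra hne
  set d : Fin m → ℝ := σ' - σs with hd
  have hd0 : ∀ i, σs i = 0 → d i = 0 := by
    intro i hi
    simp [hd, hi, hsupp i hi]
  have hdne : d ≠ 0 := sub_ne_zero.2 hne
  obtain ⟨ε, hε, hεle⟩ := exists_pos_mul_le (Finset.univ.filter (fun i => σs i ≠ 0))
      σs (fun i => |d i|) (fun i hi =>
        lt_of_le_of_ne (hσs0 i) (Ne.symm (Finset.mem_filter.1 hi).2))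
  have hGd : Gᵀ.mulVec d = 0 := by
    rw [hd, Matrix.mulVec_sub, hσ'eq, hσseq, sub_self]
  have key : ∀ s : ℝ, s = 1 ∨ s = -1 → ((∀ i, 0 ≤ (σs + (s * ε) • d) i) ∧
      Gᵀ.mulVec (σs + (s * ε) • d) = -c) ∧ (σs + (s * ε) • d) ≠ σs := by
    intro s hs
    have hsne : s ≠ 0 := by rcases hs with rfl | rfl <;> norm_num
    have habs : |s| = 1 := by rcases hs with rfl | rfl <;> norm_num
    refine ⟨⟨?_, ?_⟩, ?_⟩
    · intro i
      by_cases hi : σs i = 0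
      · simp [hi, hd0 i hi]
      · have := hεle i (Finset.mem_filter.2 ⟨Finset.mem_univ _, hi⟩)
        have h1 : |s * ε * d i| ≤ ε * |d i| := by
          rw [abs_mul, abs_mul, habs, abs_of_pos hε]
          nlinarith [abs_nonneg (d i)]
        have h2 : -(s * ε * d i) ≤ ε * |d i| := by
          have := neg_abs_le (s * ε * d i); linarith
        simp only [Pi.add_apply, Pi.smul_apply, smul_eq_mul]
        linarith
    · rw [Matrix.mulVec_add, Matrix.mulVec_smul, hGd, hσseq]
      simp
    · intro h
      have : (s * ε) • d = 0 := by
        have := congrArg (fun v => v - σs) h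
        simpa [add_sub_cancel_left] using this
      rcases smul_eq_zero.1 this with h' | h'
      · exact absurd h' (by positivity)
      · exact hdne h'
  obtain ⟨⟨hp0, hpeq⟩, hpne⟩ := key 1 (Or.inl rfl)
  obtain ⟨⟨hm0, hmeq⟩, hmne⟩ := key (-1) (Or.inr rfl)
  have h1 := hopt _ ⟨hp0, hpeq⟩ hpne
  have h2 := hopt _ ⟨hm0, hmeq⟩ hmne
  have hsum : (σs + (1 * ε) • d) ⬝ᵥ b + (σs + ((-1) * ε) • d) ⬝ᵥ b = 2 * (σs ⬝ᵥ b) := by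
    simp only [add_dotProduct, smul_dotProduct, smul_eq_mul]
    ring
  linarith

/-- At a unique primal optimum, the active rows determine directions. -/
lemma primal_active_inj {n m : ℕ} {c : Fin n → ℝ} {G : Matrix (Fin m) (Fin n) ℝ}
    {b : Fin m → ℝ} {xs : Fin n → ℝ}
    (hfeas : ∀ i, G.mulVec xs i ≤ b i)
    (hopt : ∀ x, (∀ i, G.mulVec x i ≤ b i) → x ≠ xs → c ⬝ᵥ xs < c ⬝ᵥ x)
    (d : Fin n → ℝ) (hd : ∀ i, G.mulVec xs i = b i → G.mulVec d i = 0) : d = 0 := by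
  classical
  by_contra hdne
  obtain ⟨ε, hε, hεle⟩ := exists_pos_mul_le (Finset.univ.filter (fun i => G.mulVec xs i ≠ b i))
      (fun i => b i - G.mulVec xs i) (fun i => |G.mulVec d i|) (fun i hi => by
        have := lt_of_le_of_ne (hfeas i) (Finset.mem_filter.1 hi).2
        simpa using this)
  have key : ∀ s : ℝ, s = 1 ∨ s = -1 → (∀ i, G.mulVec (xs + (s * ε) • d) i ≤ b i) ∧
      (xs + (s * ε) • d) ≠ xs := by
    intro s hs
    have hsne : s ≠ 0 := by rcases hs with rfl | rfl <;> norm_num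
    have habs : |s| = 1 := by rcases hs with rfl | rfl <;> norm_num
    constructor
    · intro i
      have hexp : G.mulVec (xs + (s * ε) • d) i = G.mulVec xs i + s * ε * G.mulVec d i := by
        rw [Matrix.mulVec_add, Matrix.mulVec_smul]; simp
      by_cases hi : G.mulVec xs i = b i
      · rw [hexp, hd i hi, hi]; ring_nf; exact le_rfl
      · have := hεle i (Finset.mem_filter.2 ⟨Finset.mem_univ _, hi⟩)
        have h1 : s * ε * G.mulVec d i ≤ ε * |G.mulVec d i| := by
          have := le_abs_self (s * ε * G.mulVec d i)
          rw [abs_mul, abs_mul, habs, abs_of_pos hε] at this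
          linarith
        rw [hexp]
        linarith
    · intro h
      have : (s * ε) • d = 0 := by
        have := congrArg (fun v => v - xs) h
        simpa [add_sub_cancel_left] using this
      rcases smul_eq_zero.1 this with h' | h'
      · exact absurd h' (by positivity)
      · exact hdne h'
  obtain ⟨hp, hpne⟩ := key 1 (Or.inl rfl)
  obtain ⟨hm, hmne⟩ := key (-1) (Or.inr rfl)
  have h1 := hopt _ hp hpne
  have h2 := hopt _ hm hmne
  have hsum : c ⬝ᵥ (xs + (1 * ε) • d) + c ⬝ᵥ (xs + ((-1) * ε) • d) = 2 * (c ⬝ᵥ xs) := by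
    simp only [dotProduct_add, dotProduct_smul, smul_eq_mul]
    ring
  linarith


lemma isPolyhedron_empty {k : ℕ} : IsPolyhedron (∅ : Set (Fin k → ℝ)) := by
  refine ⟨1, 0, fun _ => -1, ?_⟩
  ext x
  simp only [Set.mem_empty_iff_false, Set.mem_setOf_eq, Matrix.zero_mulVec, Pi.zero_apply,
    false_iff]
  intro h
  have := h 0
  norm_num at this

lemma IsPolyhedron.inter {k : ℕ} {S T : Set (Fin k → ℝ)} (hS : IsPolyhedron S)
    (hT : IsPolyhedron T) : IsPolyhedron (S ∩ T) := by
  obtain ⟨m₁, A₁, b₁, rfl⟩ := hS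
  obtain ⟨m₂, A₂, b₂, rfl⟩ := hT
  refine ⟨m₁ + m₂, Matrix.of (Fin.append (fun i => A₁ i) (fun i => A₂ i)), Fin.append b₁ b₂, ?_⟩
  ext x
  simp only [Set.mem_inter_iff, Set.mem_setOf_eq]
  constructor
  · rintro ⟨h1, h2⟩ i
    refine Fin.addCases (fun i => ?_) (fun i => ?_) i
    · simpa [Matrix.mulVec, Fin.append_left] using h1 i
    · simpa [Matrix.mulVec, Fin.append_right] using h2 i
  · intro h
    constructor
    · intro i
      have := h (Fin.castAdd m₂ i)
      simpa [Matrix.mulVec, Fin.append_left] using this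
    · intro i
      have := h (Fin.natAdd m₁ i)
      simpa [Matrix.mulVec, Fin.append_right] using this

lemma isPolyhedron_dotProduct_eq {k : ℕ} (v : Fin k → ℝ) (r : ℝ) :
    IsPolyhedron {ω : Fin k → ℝ | v ⬝ᵥ ω = r} := by
  refine ⟨2, Matrix.of ![v, -v], ![r, -r], ?_⟩
  ext ω
  simp only [Set.mem_setOf_eq, Fin.forall_fin_two, Matrix.mulVec, Matrix.of_apply,
    Matrix.cons_val_zero, Matrix.cons_val_one, Matrix.head_cons, neg_dotProduct]
  constructor
  · intro h
    constructor
    · exact le_of_eq h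
    · simp [h]
  · rintro ⟨h1, h2⟩
    have : r ≤ v ⬝ᵥ ω := by linarith
    linarith

/-- Restriction of a matrix-vector product to a subset of rows, as a linear map. -/
def rowRestrict {n m : ℕ} (G : Matrix (Fin m) (Fin n) ℝ) (J : Finset (Fin m)) :
    (Fin n → ℝ) →ₗ[ℝ] ({x // x ∈ J} → ℝ) :=
  (LinearMap.funLeft ℝ ℝ (Subtype.val : J → Fin m)).comp G.mulVecLin

@[simp] lemma rowRestrict_apply {n m : ℕ} (G : Matrix (Fin m) (Fin n) ℝ) (J : Finset (Fin m))
    (x : Fin n → ℝ) (i : J) : rowRestrict G J x i = G.mulVec x i := rfl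

/-- A left inverse of `rowRestrict G J` (junk value if not injective). -/
noncomputable def leftInv {n m : ℕ} (G : Matrix (Fin m) (Fin n) ℝ) (J : Finset (Fin m)) :
    ({x // x ∈ J} → ℝ) →ₗ[ℝ] (Fin n → ℝ) :=
  if h : LinearMap.ker (rowRestrict G J) = ⊥ then
    (LinearMap.exists_leftInverse_of_injective _ h).choose else 0

lemma leftInv_comp {n m : ℕ} (G : Matrix (Fin m) (Fin n) ℝ) (J : Finset (Fin m))
    (h : LinearMap.ker (rowRestrict G J) = ⊥) (x : Fin n → ℝ) :
    leftInv G J (rowRestrict G J x) = x := by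
  rw [leftInv, dif_pos h]
  have := (LinearMap.exists_leftInverse_of_injective (rowRestrict G J) h).choose_spec
  exact LinearMap.congr_fun this x

/-- The affine matrix for the region associated with row set `J`. -/
noncomputable def affA {n m k : ℕ} (G : Matrix (Fin m) (Fin n) ℝ)
    (F : Matrix (Fin m) (Fin k) ℝ) (J : Finset (Fin m)) : Matrix (Fin n) (Fin k) ℝ :=
  LinearMap.toMatrix' ((leftInv G J).comp (rowRestrict F J))

/-- The affine offset for the region associated with row set `J`. -/
noncomputable def affb {n m : ℕ} (G : Matrix (Fin m) (Fin n) ℝ) (ψ : Fin m → ℝ)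
    (J : Finset (Fin m)) : Fin n → ℝ :=
  leftInv G J (fun i : J => ψ i)

lemma aff_apply {n m k : ℕ} (G : Matrix (Fin m) (Fin n) ℝ) (ψ : Fin m → ℝ)
    (F : Matrix (Fin m) (Fin k) ℝ) (J : Finset (Fin m)) (ω : Fin k → ℝ) :
    (affA G F J).mulVec ω + affb G ψ J = leftInv G J (fun i : J => (ψ + F.mulVec ω) i) := by
  have h1 : (affA G F J).mulVec ω = leftInv G J (fun i : J => F.mulVec ω i) := by
    have := Matrix.toLin'_toMatrix' ((leftInv G J).comp (rowRestrict F J))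
    calc (affA G F J).mulVec ω = Matrix.toLin' (affA G F J) ω := (Matrix.toLin'_apply _ _).symm
      _ = ((leftInv G J).comp (rowRestrict F J)) ω := by rw [affA, this]
      _ = leftInv G J (fun i : J => F.mulVec ω i) := rfl
  rw [h1, affb, ← map_add]
  congr 1
  funext i
  simp [add_comm]

/-- The predicate of having a unique dual-feasible point with support in `S`. -/
def QS {n m : ℕ} (G : Matrix (Fin m) (Fin n) ℝ) (c : Fin n → ℝ) (S : Finset (Fin m)) : Prop :=
  ∃! σ : Fin m → ℝ, (∀ i ∉ S, σ i = 0) ∧ (∀ i, 0 ≤ σ i) ∧ Gᵀ.mulVec σ = -c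

/-- The unique dual-feasible point with support in `S` (junk value if not unique). -/
noncomputable def dualPt {n m : ℕ} (G : Matrix (Fin m) (Fin n) ℝ) (c : Fin n → ℝ)
    (S : Finset (Fin m)) : Fin m → ℝ :=
  if h : QS G c S then h.choose else 0

lemma dualPt_spec {n m : ℕ} (G : Matrix (Fin m) (Fin n) ℝ) (c : Fin n → ℝ)
    (S : Finset (Fin m)) (h : QS G c S) :
    (∀ i ∉ S, dualPt G c S i = 0) ∧ (∀ i, 0 ≤ dualPt G c S i) ∧ Gᵀ.mulVec (dualPt G c S) = -c := by
  rw [dualPt, dif_pos h]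
  exact h.choose_spec.1

lemma dualPt_eq {n m : ℕ} (G : Matrix (Fin m) (Fin n) ℝ) (c : Fin n → ℝ)
    (S : Finset (Fin m)) (h : QS G c S) (σ : Fin m → ℝ)
    (hσ : (∀ i ∉ S, σ i = 0) ∧ (∀ i, 0 ≤ σ i) ∧ Gᵀ.mulVec σ = -c) : dualPt G c S = σ := by
  rw [dualPt, dif_pos h]
  exact (h.choose_spec.2 σ hσ).symm

/-- The polyhedral region associated to a pair of row sets. -/
noncomputable def lpRegion {n m k : ℕ} (c : Fin n → ℝ) (G : Matrix (Fin m) (Fin n) ℝ)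
    (ψ : Fin m → ℝ) (F : Matrix (Fin m) (Fin k) ℝ) (Ω : Set (Fin k → ℝ))
    (p : Finset (Fin m) × Finset (Fin m)) : Set (Fin k → ℝ) :=
  if QS G c p.2 then
    {ω | ω ∈ Ω ∧ (∀ i, G.mulVec ((affA G F p.1).mulVec ω + affb G ψ p.1) i ≤ (ψ + F.mulVec ω) i) ∧
      dotProduct c ((affA G F p.1).mulVec ω + affb G ψ p.1) =
        -(dotProduct (dualPt G c p.2) (ψ + F.mulVec ω))}
  else ∅

lemma lpRegion_isPolyhedron {n m k : ℕ} (c : Fin n → ℝ) (G : Matrix (Fin m) (Fin n) ℝ)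
    (ψ : Fin m → ℝ) (F : Matrix (Fin m) (Fin k) ℝ) (Ω : Set (Fin k → ℝ))
    (hΩ : IsPolyhedron Ω) (p : Finset (Fin m) × Finset (Fin m)) :
    IsPolyhedron (lpRegion c G ψ F Ω p) := by
  rw [lpRegion]
  split
  case isFalse => exact isPolyhedron_empty
  case isTrue h =>
    set A := affA G F p.1 with hA
    set b := affb G ψ p.1 with hb
    set σ₀ := dualPt G c p.2 with hσ₀
    have hsplit : {ω | ω ∈ Ω ∧ (∀ i, G.mulVec (A.mulVec ω + b) i ≤ (ψ + F.mulVec ω) i) ∧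
        dotProduct c (A.mulVec ω + b) = -(dotProduct σ₀ (ψ + F.mulVec ω))} =
        Ω ∩ ({ω | ∀ i, (G * A - F).mulVec ω i ≤ (ψ - G.mulVec b) i} ∩
          {ω | (c ᵥ* A + σ₀ ᵥ* F) ⬝ᵥ ω = -(c ⬝ᵥ b) - σ₀ ⬝ᵥ ψ}) := by
      ext ω
      simp only [Set.mem_setOf_eq, Set.mem_inter_iff]
      have e1 : ∀ i, G.mulVec (A.mulVec ω + b) i = (G * A).mulVec ω i + G.mulVec b i := by
        intro i
        rw [Matrix.mulVec_add, Matrix.mulVec_mulVec]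
        simp
      have e2 : ∀ i, (G * A - F).mulVec ω i = (G * A).mulVec ω i - F.mulVec ω i := by
        intro i; rw [Matrix.sub_mulVec]; simp
      have e3 : dotProduct c (A.mulVec ω + b) = (c ᵥ* A) ⬝ᵥ ω + c ⬝ᵥ b := by
        rw [dotProduct_add, Matrix.dotProduct_mulVec]
      have e4 : dotProduct σ₀ (ψ + F.mulVec ω) = σ₀ ⬝ᵥ ψ + (σ₀ ᵥ* F) ⬝ᵥ ω := by
        rw [dotProduct_add, Matrix.dotProduct_mulVec]
      constructor
      · rintro ⟨h1, h2, h3⟩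
        refine ⟨h1, fun i => ?_, ?_⟩
        · have := h2 i
          rw [e1 i] at this
          rw [e2 i]
          simp only [Pi.add_apply, Pi.sub_apply] at this ⊢
          linarith
        · rw [e3, e4] at h3
          rw [add_dotProduct]
          linarith
      · rintro ⟨h1, h2, h3⟩
        refine ⟨h1, fun i => ?_, ?_⟩
        · have := h2 i
          rw [e2 i] at this
          rw [e1 i]
          simp only [Pi.add_apply, Pi.sub_apply] at this ⊢
          linarith
        · rw [e3, e4]
          rw [add_dotProduct] at h3
          linarith
    rw [hsplit]
    have hP2 : IsPolyhedron {ω | ∀ i, (G * A - F).mulVec ω i ≤ (ψ - G.mulVec b) i} :=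
      ⟨m, G * A - F, ψ - G.mulVec b, rfl⟩
    exact hΩ.inter (hP2.inter (isPolyhedron_dotProduct_eq _ _))

lemma lpRegion_spec {n m k : ℕ} (c : Fin n → ℝ) (G : Matrix (Fin m) (Fin n) ℝ)
    (ψ : Fin m → ℝ) (F : Matrix (Fin m) (Fin k) ℝ) (Ω : Set (Fin k → ℝ))
    (xstar : (Fin k → ℝ) → (Fin n → ℝ)) (σstar : (Fin k → ℝ) → (Fin m → ℝ))
    (hprimal : ∀ ω ∈ Ω,
      (∀ i, G.mulVec (xstar ω) i ≤ (ψ + F.mulVec ω) i) ∧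
      (∀ x : Fin n → ℝ, (∀ i, G.mulVec x i ≤ (ψ + F.mulVec ω) i) →
        x ≠ xstar ω → dotProduct c (xstar ω) < dotProduct c x))
    (hdual : ∀ ω ∈ Ω,
      ((∀ i, 0 ≤ σstar ω i) ∧ Gᵀ.mulVec (σstar ω) = -c) ∧
      (∀ σ : Fin m → ℝ, ((∀ i, 0 ≤ σ i) ∧ Gᵀ.mulVec σ = -c) →
        σ ≠ σstar ω →
          -dotProduct σ (ψ + F.mulVec ω) < -dotProduct (σstar ω) (ψ + F.mulVec ω)))
    (p : Finset (Fin m) × Finset (Fin m)) (ω : Fin k → ℝ)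
    (hω : ω ∈ lpRegion c G ψ F Ω p) :
    ω ∈ Ω ∧ xstar ω = (affA G F p.1).mulVec ω + affb G ψ p.1 ∧
      σstar ω = dualPt G c p.2 := by
  rw [lpRegion] at hω
  by_cases h : QS G c p.2
  swap
  · rw [if_neg h] at hω; exact absurd hω (Set.notMem_empty ω)
  rw [if_pos h] at hω
  obtain ⟨hωΩ, hfeasy, heq⟩ := hω
  obtain ⟨hspec1, hspec2, hspec3⟩ := dualPt_spec G c p.2 h
  obtain ⟨hxfeas, hxopt⟩ := hprimal ω hωΩ
  obtain ⟨⟨hσn, hσeq⟩, hσopt⟩ := hdual ω hωΩ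
  set y := (affA G F p.1).mulVec ω + affb G ψ p.1 with hy
  set b' := ψ + F.mulVec ω with hb'
  have wd1 : -(dualPt G c p.2 ⬝ᵥ b') ≤ c ⬝ᵥ xstar ω := weak_duality hxfeas hspec2 hspec3
  have hxy : xstar ω = y := by
    by_contra hne
    have := hxopt y hfeasy (fun hh => hne hh.symm)
    rw [heq] at this
    exact absurd this (not_lt.2 wd1)
  refine ⟨hωΩ, hxy, ?_⟩
  by_contra hne
  have h1 := hσopt (dualPt G c p.2) ⟨hspec2, hspec3⟩ (fun hh => hne hh.symm)
  have wd2 : -(σstar ω ⬝ᵥ b') ≤ c ⬝ᵥ xstar ω := weak_duality hxfeas hσn hσeq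
  have h2 : c ⬝ᵥ xstar ω = -(dualPt G c p.2 ⬝ᵥ b') := by rw [hxy, heq]
  simp only [dotProduct] at h1 h2 wd2 ⊢
  linarith

/-- multiparametric programming. Consider the parametric LP
`min cᵀx s.t. Gx ≤ ψ + Fω` and its dual
`max −σᵀ(ψ + Fω) s.t. σ ≥ 0, Gᵀσ = −c`. If `Ω` is a polyhedron and for every
`ω ∈ Ω` the values `x*(ω)` and `σ*(ω)` are the unique primal and dual optimal
solutions, then `Ω` is covered by finitely many polyhedra on each of which `x*`
is affine and `σ*` is constant: the primal decision policy is piecewise affine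
and the dual decision policy is stepwise. -/
theorem stmt3_multiparametric_lp_policies
    {n m k : ℕ}
    (c : Fin n → ℝ) (G : Matrix (Fin m) (Fin n) ℝ) (ψ : Fin m → ℝ)
    (F : Matrix (Fin m) (Fin k) ℝ)
    (Ω : Set (Fin k → ℝ)) (hΩ : IsPolyhedron Ω)
    (xstar : (Fin k → ℝ) → (Fin n → ℝ))
    (σstar : (Fin k → ℝ) → (Fin m → ℝ))
    -- `x*(ω)` is the unique optimal solution of the primal LP(ω)
    (hprimal : ∀ ω ∈ Ω,
      (∀ i, G.mulVec (xstar ω) i ≤ (ψ + F.mulVec ω) i) ∧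
      (∀ x : Fin n → ℝ, (∀ i, G.mulVec x i ≤ (ψ + F.mulVec ω) i) →
        x ≠ xstar ω →
          dotProduct c (xstar ω) < dotProduct c x))
    -- `σ*(ω)` is the unique optimal solution of the dual
    (hdual : ∀ ω ∈ Ω,
      ((∀ i, 0 ≤ σstar ω i) ∧ (Matrix.transpose G).mulVec (σstar ω) = -c) ∧
      (∀ σ : Fin m → ℝ, ((∀ i, 0 ≤ σ i) ∧ (Matrix.transpose G).mulVec σ = -c) →
        σ ≠ σstar ω →
          -dotProduct σ (ψ + F.mulVec ω) < -dotProduct (σstar ω) (ψ + F.mulVec ω))) :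
    ∃ (N : ℕ) (R : Fin N → Set (Fin k → ℝ)),
      (∀ i, IsPolyhedron (R i)) ∧
      (⋃ i, R i) = Ω ∧
      (∀ i, ∃ (A : Matrix (Fin n) (Fin k) ℝ) (b : Fin n → ℝ),
        ∀ ω ∈ R i, xstar ω = A.mulVec ω + b) ∧
      (∀ i, ∃ σ₀ : Fin m → ℝ, ∀ ω ∈ R i, σstar ω = σ₀) := by
  classical
  set ι := Finset (Fin m) × Finset (Fin m) with hι
  set e : Fin (Fintype.card ι) ≃ ι := (Fintype.equivFin ι).symm with he
  refine ⟨Fintype.card ι, fun i => lpRegion c G ψ F Ω (e i), ?_, ?_, ?_, ?_⟩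
  · intro i
    exact lpRegion_isPolyhedron c G ψ F Ω hΩ (e i)
  · -- union equals Ω
    ext ω
    simp only [Set.mem_iUnion]
    constructor
    · rintro ⟨i, hi⟩
      exact (lpRegion_spec c G ψ F Ω xstar σstar hprimal hdual (e i) ω hi).1
    · intro hω
      -- coverage
      obtain ⟨hxfeas, hxopt⟩ := hprimal ω hω
      obtain ⟨⟨hσn, hσeq⟩, hσopt⟩ := hdual ω hω
      set b' := ψ + F.mulVec ω with hb'
      set J : Finset (Fin m) :=
        Finset.univ.filter (fun i => G.mulVec (xstar ω) i = b' i) with hJ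
      set S : Finset (Fin m) := Finset.univ.filter (fun i => σstar ω i ≠ 0) with hS
      -- the active rows are injective
      have hker : LinearMap.ker (rowRestrict G J) = ⊥ := by
        rw [LinearMap.ker_eq_bot']
        intro d hd
        refine primal_active_inj hxfeas hxopt d fun i hi => ?_
        have : rowRestrict G J d ⟨i, Finset.mem_filter.2 ⟨Finset.mem_univ _, hi⟩⟩ = 0 :=
          congrFun hd _
        simpa using this
      -- x* is given by the affine formula
      have hx : xstar ω = (affA G F J).mulVec ω + affb G ψ J := by
        rw [aff_apply]
        have : (fun i : J => b' i) = rowRestrict G J (xstar ω) := by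
          funext i
          have : G.mulVec (xstar ω) i.1 = b' i.1 := (Finset.mem_filter.1 i.2).2
          simp [this]
        rw [this, leftInv_comp G J hker]
      -- strong duality certificate
      obtain ⟨μ, hμ0, hμG, hμb⟩ := lp_exists_dual_certificate c G b' (xstar ω) hxfeas hxopt
      have hμσ : μ = σstar ω := by
        by_contra hne
        have h1 := hσopt μ ⟨hμ0, hμG⟩ hne
        have h2 : -(σstar ω ⬝ᵥ b') ≤ c ⬝ᵥ xstar ω := weak_duality hxfeas hσn hσeq
        simp only [dotProduct] at h1 h2 hμb
        linarith
      have hstrong : dotProduct c (xstar ω) = -(dotProduct (σstar ω) b') := by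
        rw [← hμσ]
        simp only [dotProduct] at hμb ⊢
        linarith
      -- S determines σ* uniquely
      have hQS : QS G c S := by
        refine ⟨σstar ω, ⟨fun i hi => ?_, hσn, hσeq⟩, fun σ' hσ' => ?_⟩
        · by_contra hne
          exact hi (Finset.mem_filter.2 ⟨Finset.mem_univ _, hne⟩)
        · refine dual_support_unique hσn hσeq hσopt σ' (fun i hi => ?_) hσ'.2.1 hσ'.2.2
          refine hσ'.1 i (fun hmem => ?_)
          exact (Finset.mem_filter.1 hmem).2 hi
      have hdpt : dualPt G c S = σstar ω :=
        dualPt_eq G c S hQS (σstar ω)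
          ⟨fun i hi => by
            by_contra hne
            exact hi (Finset.mem_filter.2 ⟨Finset.mem_univ _, hne⟩), hσn, hσeq⟩
      refine ⟨e.symm (J, S), ?_⟩
      rw [Equiv.apply_symm_apply]
      rw [lpRegion, if_pos hQS]
      refine ⟨hω, ?_, ?_⟩
      · intro i
        rw [← hx]
        exact hxfeas i
      · rw [← hx, hdpt]
        exact hstrong
  · intro i
    exact ⟨affA G F (e i).1, affb G ψ (e i).1, fun ω hω =>
      (lpRegion_spec c G ψ F Ω xstar σstar hprimal hdual (e i) ω hω).2.1⟩
  · intro i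
    exact ⟨dualPt G c (e i).2, fun ω hω =>
      (lpRegion_spec c G ψ F Ω xstar σstar hprimal hdual (e i) ω hω).2.2⟩
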